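/- Let f be C⁴ on a neighbourhood of x₀ and fix v ∈ E. Define the nonlinear part f_nl(a) := f(x₀ + a) − f(x₀) − f′(x₀)(a). Then the three-point stencil for the third directional derivative is fourth-order accurate: the function ε ↦ 12 • f_nl(ε•v) − 48 • f_nl((ε/2)•v) − ε³ • f⁽³⁾(x₀)[v,v,v] is O(ε⁴) as ε → 0. -/

import Mathlib

open Topology Asymptotics

lemma step_isBigO {F : Type*} [NormedAddCommGroup F] [NormedSpace ℝ F]
    {h h' : ℝ → F} {n : ℕ}
    (hd : ∀ᶠ t in 𝓝 (0:ℝ), HasDerivAt h (h' t) t) (h0 : h 0 = 0)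
    (hO : h' =O[𝓝 (0:ℝ)] fun t => t ^ n) :
    h =O[𝓝 (0:ℝ)] fun t => t ^ (n + 1) := by
  obtain ⟨c, hc0, hc⟩ := hO.exists_nonneg
  have hb : ∀ᶠ t in 𝓝 (0:ℝ), ‖h' t‖ ≤ c * ‖t ^ n‖ := hc.bound
  obtain ⟨δ, δpos, hδ⟩ := Metric.eventually_nhds_iff_ball.mp (hd.and hb)
  rw [isBigO_iff]
  refine ⟨c, Metric.eventually_nhds_iff_ball.mpr ⟨δ, δpos, fun t ht => ?_⟩⟩
  have habs : ∀ x ∈ Set.uIcc (0:ℝ) t, |x| ≤ |t| := by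
    intro x hx
    rcases Set.mem_uIcc.mp hx with ⟨h1, h2⟩ | ⟨h1, h2⟩
    · rw [abs_of_nonneg h1, abs_of_nonneg (h1.trans h2)]; exact h2
    · rw [abs_of_nonpos h2, abs_of_nonpos (h1.trans h2)]; linarith
  have hsub : Set.uIcc (0:ℝ) t ⊆ Metric.ball (0:ℝ) δ := by
    intro x hx
    have := habs x hx
    have ht' : |t| < δ := by simpa [Real.dist_eq] using ht
    simp only [Metric.mem_ball, Real.dist_eq, sub_zero]
    linarith
  have key := (convex_uIcc (0:ℝ) t).norm_image_sub_le_of_norm_hasDerivWithin_le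
    (f' := h') (C := c * |t| ^ n)
    (fun x hx => ((hδ x (hsub hx)).1).hasDerivWithinAt)
    (fun x hx => by
      have := (hδ x (hsub hx)).2
      have hxx : ‖x ^ n‖ ≤ |t| ^ n := by
        rw [Real.norm_eq_abs, abs_pow]
        exact pow_le_pow_left₀ (abs_nonneg x) (habs x hx) n
      calc ‖h' x‖ ≤ c * ‖x ^ n‖ := this
        _ ≤ c * |t| ^ n := by nlinarith [norm_nonneg (x ^ n)])
    Set.left_mem_uIcc Set.right_mem_uIcc
  rw [h0, sub_zero] at key
  calc ‖h t‖ ≤ c * |t| ^ n * ‖t - 0‖ := key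
    _ = c * ‖t ^ (n+1)‖ := by
        rw [Real.norm_eq_abs, Real.norm_eq_abs, sub_zero, abs_pow]; ring

lemma iteratedFDeriv_three_apply' {E F : Type*} [NormedAddCommGroup E] [NormedSpace ℝ E]
    [NormedAddCommGroup F] [NormedSpace ℝ F] (f : E → F) (z : E) (m : Fin 3 → E) :
    iteratedFDeriv ℝ 3 f z m = fderiv ℝ (fderiv ℝ (fderiv ℝ f)) z (m 0) (m 1) (m 2) := by
  rw [iteratedFDeriv_succ_apply_right, iteratedFDeriv_two_apply]
  rfl


/-- Third-order-accurate stencil for the third directional derivative: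
`12 • f_nl(ε•v) - 48 • f_nl((ε/2)•v) = ε³ • f⁽³⁾(x₀)[v,v,v] + O(ε⁴)`. -/
theorem third_directional_derivative_stencil_order4
    {E F : Type*} [NormedAddCommGroup E] [NormedSpace ℝ E] [CompleteSpace E]
    [NormedAddCommGroup F] [NormedSpace ℝ F] [CompleteSpace F]
    (f : E → F) (x₀ v : E)
    (hf : ContDiffAt ℝ 4 f x₀)
    (fnl : E → F) (hfnl : ∀ a, fnl a = f (x₀ + a) - f x₀ - fderiv ℝ f x₀ a) :
    (fun ε : ℝ =>
        (12 : ℝ) • fnl (ε • v) - (48 : ℝ) • fnl ((ε / 2) • v)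
          - ε ^ 3 • iteratedFDeriv ℝ 3 f x₀ ![v, v, v])
      =O[𝓝 (0 : ℝ)] fun ε => ε ^ 4 := by
  obtain ⟨u₀, hu₀, hfu₀⟩ := hf.contDiffOn le_rfl (by simp)
  obtain ⟨u, husub, huo, hxu⟩ := mem_nhds_iff.mp hu₀
  have hfu : ContDiffOn ℝ 4 f u := hfu₀.mono husub
  set φ₁ := fderiv ℝ f with hφ₁def
  set φ₂ := fderiv ℝ φ₁ with hφ₂def
  set φ₃ := fderiv ℝ φ₂ with hφ₃def
  letI : NormedAddCommGroup (E →L[ℝ] E →L[ℝ] E →L[ℝ] F) :=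
    ContinuousLinearMap.toNormedAddCommGroup (𝕜 := ℝ) (𝕜₂ := ℝ) (E := E) (F := E →L[ℝ] E →L[ℝ] F)
  letI : NormedSpace ℝ (E →L[ℝ] E →L[ℝ] E →L[ℝ] F) :=
    ContinuousLinearMap.toNormedSpace (𝕜 := ℝ) (𝕜₂ := ℝ) (E := E) (F := E →L[ℝ] E →L[ℝ] F)
  have h1 : ContDiffOn ℝ 3 φ₁ u := hfu.fderiv_of_isOpen huo (by norm_num)
  have h2 : ContDiffOn ℝ 2 φ₂ u := h1.fderiv_of_isOpen huo (by norm_num)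
  have h3 : ContDiffOn ℝ 1 φ₃ u := h2.fderiv_of_isOpen huo (by norm_num)
  have hdf : ∀ x ∈ u, HasFDerivAt f (φ₁ x) x := fun x hx =>
    ((hfu.differentiableOn (by norm_num)).differentiableAt (huo.mem_nhds hx)).hasFDerivAt
  have hdφ1 : ∀ x ∈ u, HasFDerivAt φ₁ (φ₂ x) x := fun x hx =>
    ((h1.differentiableOn (by norm_num)).differentiableAt (huo.mem_nhds hx)).hasFDerivAt
  have hdφ2 : ∀ x ∈ u, HasFDerivAt φ₂ (φ₃ x) x := fun x hx =>
    ((h2.differentiableOn (by norm_num)).differentiableAt (huo.mem_nhds hx)).hasFDerivAt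
  have hdφ3 : DifferentiableAt ℝ φ₃ x₀ :=
    (h3.differentiableOn (by norm_num)).differentiableAt (huo.mem_nhds hxu)
  -- line map
  set L : ℝ → E := fun t => x₀ + t • v with hLdef
  have hL : ∀ t : ℝ, HasDerivAt L v t := fun t => by
    exact (((hasDerivAt_id t).smul_const v).const_add x₀).congr_deriv (by simp)
  have hL0 : L 0 = x₀ := by simp [hLdef]
  have hLs : ∀ᶠ t in 𝓝 (0:ℝ), L t ∈ u := by
    have hcont : ContinuousAt L 0 := (hL 0).continuousAt
    have := hcont.preimage_mem_nhds (by rw [hL0]; exact huo.mem_nhds hxu)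
    exact this
  -- constants
  set d1 := φ₁ x₀ v with hd1def
  set d2 := φ₂ x₀ v v with hd2def
  set d3 := φ₃ x₀ v v v with hd3def
  -- derivative chains on the line
  have hg1 : ∀ t : ℝ, L t ∈ u → HasDerivAt (fun t => f (L t)) (φ₁ (L t) v) t := fun t ht =>
    (hdf (L t) ht).comp_hasDerivAt t (hL t)
  have hg2 : ∀ t : ℝ, L t ∈ u → HasDerivAt (fun t => φ₁ (L t) v) (φ₂ (L t) v v) t := by
    intro t ht
    have hA : HasDerivAt (fun t => φ₁ (L t)) (φ₂ (L t) v) t :=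
      (hdφ1 (L t) ht).comp_hasDerivAt t (hL t)
    simpa using hA.clm_apply (hasDerivAt_const t v)
  have hg3 : ∀ t : ℝ, L t ∈ u → HasDerivAt (fun t => φ₂ (L t) v v) (φ₃ (L t) v v v) t := by
    intro t ht
    have hA : HasDerivAt (fun t => φ₂ (L t)) (φ₃ (L t) v) t :=
      ((h2.differentiableOn (by norm_num)).differentiableAt (huo.mem_nhds ht)).hasFDerivAt.comp_hasDerivAt t (hL t)
    have hB : HasDerivAt (fun t => φ₂ (L t) v) (φ₃ (L t) v v) t := by
      simpa using hA.clm_apply (hasDerivAt_const t v)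
    simpa using hB.clm_apply (hasDerivAt_const t v)
  -- remainder of order 1 for φ₃ along the line
  have hR1 : (fun t : ℝ => φ₃ (L t) v v v - d3) =O[𝓝 (0:ℝ)] fun t => t ^ 1 := by
    have hL0' : DifferentiableAt ℝ (fun t : ℝ => φ₃ (L t) v v v) 0 := by
      have hc : DifferentiableAt ℝ (fun t : ℝ => φ₃ (L t)) 0 := by
        have h' : DifferentiableAt ℝ φ₃ (L 0) := by rwa [hL0]
        exact h'.comp 0 (hL 0).differentiableAt
      exact ((hc.clm_apply (differentiableAt_const v)).clm_apply
        (differentiableAt_const v)).clm_apply (differentiableAt_const v)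
    have := hL0'.isBigO_sub
    simp only [hL0] at this
    calc (fun t : ℝ => φ₃ (L t) v v v - d3) =O[𝓝 (0:ℝ)] (fun t : ℝ => t - 0) := this
      _ =O[𝓝 (0:ℝ)] fun t => t ^ 1 := by
          apply Asymptotics.isBigO_of_le
          intro t; simp
  -- second remainder
  set C : ℝ → F := fun t => φ₂ (L t) v v - d2 - t • d3 with hCdef
  have hR2 : C =O[𝓝 (0:ℝ)] fun t => t ^ 2 := by
    refine step_isBigO ?_ (by simp [hCdef, hL0, hd2def]) hR1
    filter_upwards [hLs] with t ht
    exact (((hg3 t ht).sub_const d2).sub ((hasDerivAt_id t).smul_const d3)).congr_deriv (by simp)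
  -- third remainder
  set B : ℝ → F := fun t => φ₁ (L t) v - d1 - t • d2 - (t ^ 2 / 2) • d3 with hBdef
  have hR3 : B =O[𝓝 (0:ℝ)] fun t => t ^ 3 := by
    refine step_isBigO ?_ (by simp [hBdef, hL0, hd1def]) hR2
    filter_upwards [hLs] with t ht
    have hq : HasDerivAt (fun t : ℝ => (t ^ 2 / 2) • d3) (t • d3) t := by
      have := ((hasDerivAt_pow 2 t).div_const 2).smul_const d3
      convert this using 1
      rw [show ((2:ℕ):ℝ) * t ^ 1 / 2 = t by push_cast; ring]
    have := (((hg2 t ht).sub_const d1).sub ((hasDerivAt_id t).smul_const d2)).sub hq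
    exact this.congr_deriv (by simp [hCdef])
  -- fourth remainder
  set A : ℝ → F := fun t => f (L t) - f x₀ - t • d1 - (t ^ 2 / 2) • d2 - (t ^ 3 / 6) • d3
    with hAdef
  have hR4 : A =O[𝓝 (0:ℝ)] fun t => t ^ 4 := by
    refine step_isBigO ?_ (by simp [hAdef, hL0]) hR3
    filter_upwards [hLs] with t ht
    have hq2 : HasDerivAt (fun t : ℝ => (t ^ 2 / 2) • d2) (t • d2) t := by
      have := ((hasDerivAt_pow 2 t).div_const 2).smul_const d2
      convert this using 1
      rw [show ((2:ℕ):ℝ) * t ^ 1 / 2 = t by push_cast; ring]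
    have hq3 : HasDerivAt (fun t : ℝ => (t ^ 3 / 6) • d3) ((t ^ 2 / 2) • d3) t := by
      have := ((hasDerivAt_pow 3 t).div_const 6).smul_const d3
      convert this using 1
      rw [show ((3:ℕ):ℝ) * t ^ 2 / 6 = t ^ 2 / 2 by push_cast; ring]
    have := ((((hg1 t ht).sub_const (f x₀)).sub
      ((hasDerivAt_id t).smul_const d1)).sub hq2).sub hq3
    exact this.congr_deriv (by simp [hBdef])
  -- assemble
  have hiter : iteratedFDeriv ℝ 3 f x₀ ![v, v, v] = d3 := by
    rw [iteratedFDeriv_three_apply']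
    simp [hd3def, hφ₃def, hφ₂def, hφ₁def]
  have htarget : ∀ ε : ℝ,
      (12 : ℝ) • fnl (ε • v) - (48 : ℝ) • fnl ((ε / 2) • v)
        - ε ^ 3 • iteratedFDeriv ℝ 3 f x₀ ![v, v, v]
      = (12 : ℝ) • A ε - (48 : ℝ) • A (ε / 2) := by
    intro ε
    rw [hiter, hfnl, hfnl]
    simp only [hAdef, hLdef, map_smul]
    module
  have h12 : (fun ε : ℝ => (12 : ℝ) • A ε) =O[𝓝 (0:ℝ)] fun ε => ε ^ 4 :=
    (hR4.const_smul_left _)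
  have h48 : (fun ε : ℝ => (48 : ℝ) • A (ε / 2)) =O[𝓝 (0:ℝ)] fun ε => ε ^ 4 := by
    have htend : Filter.Tendsto (fun ε : ℝ => ε / 2) (𝓝 0) (𝓝 0) := by
      simpa using (continuous_id.div_const 2).tendsto (0:ℝ)
    have := (hR4.comp_tendsto htend).const_smul_left (48 : ℝ)
    calc (fun ε : ℝ => (48 : ℝ) • A (ε / 2)) =O[𝓝 (0:ℝ)] fun ε => (ε / 2) ^ 4 := this
      _ =O[𝓝 (0:ℝ)] fun ε => ε ^ 4 := by
          apply Asymptotics.isBigO_of_le' (c := 1)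
          intro ε
          simp only [Real.norm_eq_abs, abs_pow, one_mul, abs_div]
          have h2 : |ε| / |(2:ℝ)| ≤ |ε| := by
            rw [abs_two]; linarith [abs_nonneg ε]
          exact pow_le_pow_left₀ (by positivity) h2 4
  have := h12.sub h48
  simpa only [htarget] using this
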